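/- Let K be a field of characteristic zero. If f₁,...,fₙ ∈ K[[x₁,...,x_m]] are nonzero power series whose leading monomials (minimal nonzero monomials with respect to the lexicographic order on exponents) have pairwise distinct exponent vectors, then some generalized Wronskian of f₁,...,fₙ is nonzero, and for any choice of operators for which the generalized Wronskian W₀ of the leading monomials is nonzero, the leading monomial of the generalized Wronskian W of f₁,...,fₙ equals the leading monomial of W₀. -/

import Mathlib

noncomputable def mvpsDiffOp {K : Type*} [CommSemiring K] {m : ℕ} (j : Fin m →₀ ℕ)
    (f : MvPowerSeries (Fin m) K) : MvPowerSeries (Fin m) K :=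
  fun α => (∏ k : Fin m, ((α k + j k).descFactorial (j k) : K)) *
    MvPowerSeries.coeff (α + j) f

def IsLexLeadingExp {K : Type*} [CommSemiring K] {m : ℕ}
    (f : MvPowerSeries (Fin m) K) (α : Fin m →₀ ℕ) : Prop :=
  MvPowerSeries.coeff α f ≠ 0 ∧
    ∀ β : Fin m →₀ ℕ, MvPowerSeries.coeff β f ≠ 0 → toLex α ≤ toLex β

namespace GLWAux

open Finset MvPowerSeries

lemma desc_id (a b : ℕ) :
    a * a.descFactorial b = a.descFactorial (b + 1) + b * a.descFactorial b := by
  rcases le_or_gt b a with h | h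
  · calc a * a.descFactorial b = ((a - b) + b) * a.descFactorial b := by rw [Nat.sub_add_cancel h]
    _ = (a - b) * a.descFactorial b + b * a.descFactorial b := by ring
    _ = _ := by rw [Nat.descFactorial_succ]
  · rw [Nat.descFactorial_eq_zero_iff_lt.mpr h, Nat.descFactorial_eq_zero_iff_lt.mpr (h.trans (Nat.lt_succ_self b))]
    simp

lemma coeff_mvpsDiffOp {K : Type*} [CommSemiring K] {m : ℕ} (δ e : Fin m →₀ ℕ)
    (h : MvPowerSeries (Fin m) K) :
    MvPowerSeries.coeff e (mvpsDiffOp δ h) =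
      (∏ k : Fin m, ((e k + δ k).descFactorial (δ k) : K)) *
        MvPowerSeries.coeff (e + δ) h := rfl

lemma mvpsDiffOp_monomial {K : Type*} [CommSemiring K] {m : ℕ} (δ a : Fin m →₀ ℕ) (c : K) :
    mvpsDiffOp δ (MvPowerSeries.monomial a c) =
      MvPowerSeries.monomial (a - δ)
        ((∏ k : Fin m, ((a k).descFactorial (δ k) : K)) * c) := by
  ext e
  rw [coeff_mvpsDiffOp, coeff_monomial, coeff_monomial]
  by_cases h1 : e + δ = a
  · rw [if_pos h1, if_pos (eq_tsub_of_add_eq h1)]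
    congr 1
    exact Finset.prod_congr rfl fun k _ => by rw [← h1]; rfl
  · rw [if_neg h1, mul_zero]
    by_cases h2 : e = a - δ
    · rw [if_pos h2]
      have hda : ¬ δ ≤ a := fun hle => h1 (by rw [h2, tsub_add_cancel_of_le hle])
      rw [Finsupp.le_def] at hda; push_neg at hda
      obtain ⟨k, hk⟩ := hda
      rw [Finset.prod_eq_zero (mem_univ k)
        (by rw [Nat.descFactorial_eq_zero_iff_lt.mpr hk, Nat.cast_zero]), zero_mul]
    · rw [if_neg h2]

lemma prod_monomial {K : Type*} [CommSemiring K] {m : ℕ} {ι : Type*} (s : Finset ι)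
    (e : ι → (Fin m →₀ ℕ)) (a : ι → K) :
    (∏ j ∈ s, MvPowerSeries.monomial (e j) (a j)) =
      MvPowerSeries.monomial (∑ j ∈ s, e j) (∏ j ∈ s, a j) := by
  induction s using Finset.cons_induction with
  | empty => simp
  | cons j s hj ih => rw [prod_cons, ih, sum_cons, prod_cons, monomial_mul_monomial]

lemma le_of_descprod_ne_zero {K : Type*} [Field K] [CharZero K] {m : ℕ} (a δ : Fin m →₀ ℕ)
    (h : (∏ k : Fin m, ((a k).descFactorial (δ k) : K)) ≠ 0) : δ ≤ a := by
  rw [Finsupp.le_def]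
  intro k
  by_contra hk
  push_neg at hk
  exact h (Finset.prod_eq_zero (mem_univ k)
    (by rw [Nat.descFactorial_eq_zero_iff_lt.mpr hk, Nat.cast_zero]))

lemma toLex_sum {m : ℕ} {ι : Type*} (s : Finset ι) (y : ι → (Fin m →₀ ℕ)) :
    toLex (∑ j ∈ s, y j) = ∑ j ∈ s, toLex (y j) := by
  induction s using Finset.cons_induction with
  | empty => rfl
  | cons j s hj ih => rw [sum_cons, sum_cons, ← ih]; rfl



section SpanStuff

variable {K : Type*} [Field K] [CharZero K] {m n : ℕ} (α : Fin n → (Fin m →₀ ℕ))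

/-- row of falling-factorial values -/
noncomputable def vrow (α : Fin n → (Fin m →₀ ℕ)) (δ : Fin m →₀ ℕ) : Fin n → K :=
  fun j => ∏ k : Fin m, ((α j k).descFactorial (δ k) : K)

def Sset (α : Fin n → (Fin m →₀ ℕ)) (s : ℕ) : Set (Fin n → K) :=
  {w | ∃ δ : Fin m →₀ ℕ, (δ.sum fun _ e => e) ≤ s ∧ w = vrow (K := K) α δ}

lemma vrow_mul (δ : Fin m →₀ ℕ) (k0 : Fin m) (j : Fin n) :
    ((α j k0 : K)) * vrow α δ j =
      vrow α (δ + Finsupp.single k0 1) j + (δ k0 : K) * vrow α δ j := by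
  unfold vrow
  rw [← Finset.mul_prod_erase univ (fun k => ((α j k).descFactorial (δ k) : K)) (mem_univ k0),
    ]
  conv_rhs => rw [← Finset.mul_prod_erase univ _ (mem_univ k0)]
  have e1 : ∏ k ∈ univ.erase k0, ((α j k).descFactorial ((δ + Finsupp.single k0 1 : Fin m →₀ ℕ) k) : K) =
      ∏ k ∈ univ.erase k0, ((α j k).descFactorial (δ k) : K) :=
    Finset.prod_congr rfl fun k hk => by
      rw [Finsupp.add_apply, Finsupp.single_apply, if_neg (Finset.ne_of_mem_erase hk).symm,
        add_zero]
  rw [e1, Finsupp.add_apply, Finsupp.single_apply, if_pos rfl]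
  have hcast : ((α j k0 : K)) * ((α j k0).descFactorial (δ k0) : K) =
      ((α j k0).descFactorial (δ k0 + 1) : K) +
        (δ k0 : K) * ((α j k0).descFactorial (δ k0) : K) := by
    exact_mod_cast congrArg (Nat.cast : ℕ → K) (desc_id (α j k0) (δ k0))
  rw [← mul_assoc, hcast]
  ring

lemma degsum_add_single (δ : Fin m →₀ ℕ) (k0 : Fin m) :
    ((δ + Finsupp.single k0 1).sum fun _ e => e) = (δ.sum fun _ e => e) + 1 := by
  rw [Finsupp.sum_add_index' (fun _ => rfl) (fun _ _ _ => rfl), Finsupp.sum_single_index rfl]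

lemma pow_mem_span (N : ℕ) (t : ℕ) :
    (fun j => ((∑ k : Fin m, α j k * N ^ (k : ℕ) : ℕ) : K) ^ t) ∈
      Submodule.span K (Sset α t) := by
  induction t with
  | zero =>
    have h0 : (fun (j : Fin n) => ((∑ k : Fin m, α j k * N ^ (k : ℕ) : ℕ) : K) ^ 0) =
        vrow α 0 := by
      funext j
      simp [vrow]
    rw [h0]
    exact Submodule.subset_span ⟨0, by simp, rfl⟩
  | succ t ih =>
    have key : ∀ w ∈ Submodule.span K (Sset (K := K) α t),
        (fun j => ((∑ k : Fin m, α j k * N ^ (k : ℕ) : ℕ) : K) * w j) ∈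
          Submodule.span K (Sset (K := K) α (t + 1)) := by
      intro w hw
      induction hw using Submodule.span_induction with
      | mem w hwmem =>
        obtain ⟨δ, hδ, rfl⟩ := hwmem
        have hfun : (fun j => ((∑ k : Fin m, α j k * N ^ (k : ℕ) : ℕ) : K) * vrow α δ j) =
            ∑ k0 : Fin m, ((N ^ (k0 : ℕ) : K)) •
              (vrow (K := K) α (δ + Finsupp.single k0 1) + ((δ k0 : K)) • vrow (K := K) α δ) := by
          funext j
          rw [Finset.sum_apply]
          simp only [Pi.smul_apply, Pi.add_apply, smul_eq_mul]
          have : ∀ k0 : Fin m,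
              (N ^ (k0 : ℕ) : K) * (vrow (K := K) α (δ + Finsupp.single k0 1) j
                + (δ k0 : K) * vrow (K := K) α δ j) =
              (N ^ (k0 : ℕ) : K) * ((α j k0 : K) * vrow (K := K) α δ j) := by
            intro k0; rw [← vrow_mul]
          rw [Finset.sum_congr rfl fun k0 _ => this k0]
          have : ∑ k0 : Fin m, (N ^ (k0 : ℕ) : K) * ((α j k0 : K) * vrow (K := K) α δ j) =
              (∑ k0 : Fin m, (α j k0 : K) * (N ^ (k0 : ℕ) : K)) * vrow (K := K) α δ j := by
            rw [Finset.sum_mul]; exact Finset.sum_congr rfl fun k0 _ => by ring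
          rw [this]
          congr 1
          push_cast
          rfl
        rw [hfun]
        refine Submodule.sum_mem _ fun k0 _ => Submodule.smul_mem _ _ (Submodule.add_mem _ ?_ (Submodule.smul_mem _ _ ?_))
        · exact Submodule.subset_span ⟨δ + Finsupp.single k0 1,
            by rw [degsum_add_single]; omega, rfl⟩
        · exact Submodule.subset_span ⟨δ, by omega, rfl⟩
      | zero =>
        have : (fun j => ((∑ k : Fin m, α j k * N ^ (k : ℕ) : ℕ) : K) * (0 : Fin n → K) j) =
            (0 : Fin n → K) := by funext j; simp
        rw [this]; exact Submodule.zero_mem _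
      | add x y hx hy hx' hy' =>
        have : (fun j => ((∑ k : Fin m, α j k * N ^ (k : ℕ) : ℕ) : K) * ((x + y) j)) =
            (fun j => ((∑ k : Fin m, α j k * N ^ (k : ℕ) : ℕ) : K) * x j) +
            (fun j => ((∑ k : Fin m, α j k * N ^ (k : ℕ) : ℕ) : K) * y j) := by
          funext j; simp [mul_add]
        rw [this]; exact Submodule.add_mem _ hx' hy'
      | smul a x hx hx' =>
        have : (fun j => ((∑ k : Fin m, α j k * N ^ (k : ℕ) : ℕ) : K) * (a • x) j) =
            a • (fun j => ((∑ k : Fin m, α j k * N ^ (k : ℕ) : ℕ) : K) * x j) := by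
          funext j; simp [mul_left_comm]
        rw [this]; exact Submodule.smul_mem _ _ hx'
    have hstep := key _ ih
    have heq : (fun j => ((∑ k : Fin m, α j k * N ^ (k : ℕ) : ℕ) : K) ^ (t + 1)) =
        (fun j => ((∑ k : Fin m, α j k * N ^ (k : ℕ) : ℕ) : K) *
          ((∑ k : Fin m, α j k * N ^ (k : ℕ) : ℕ) : K) ^ t) := by
      funext j; rw [pow_succ']
    rw [heq]
    exact hstep

end SpanStuff

lemma sum_base_lt {N mm : ℕ} (b : Fin mm → ℕ) (hb : ∀ k, b k < N) :
    ∑ k : Fin mm, b k * N ^ (k : ℕ) < N ^ mm := by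
  induction mm with
  | zero => simp
  | succ mm ih =>
    rw [Fin.sum_univ_castSucc]
    have h1 : ∑ k : Fin mm, b k.castSucc * N ^ ((k.castSucc : Fin (mm+1)) : ℕ) < N ^ mm := by
      simpa [Fin.coe_castSucc] using ih (fun k => b k.castSucc) (fun k => hb _)
    calc ∑ k : Fin mm, b k.castSucc * N ^ ((k.castSucc : Fin (mm+1)) : ℕ)
          + b (Fin.last mm) * N ^ ((Fin.last mm : Fin (mm+1)) : ℕ)
        < N ^ mm + b (Fin.last mm) * N ^ mm := by
          rw [Fin.val_last]; exact Nat.add_lt_add_right h1 _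
      _ = (1 + b (Fin.last mm)) * N ^ mm := by ring
      _ ≤ N * N ^ mm := Nat.mul_le_mul_right _ (by have := hb (Fin.last mm); omega)
      _ = N ^ (mm + 1) := (pow_succ' N mm).symm

lemma digit_unique {M x y p q : ℕ} (hx : x < M) (hy : y < M) (h : x + p * M = y + q * M) :
    p = q ∧ x = y := by
  have hM : 0 < M := lt_of_le_of_lt (Nat.zero_le x) hx
  have hp : (x + p * M) / M = p := by
    rw [Nat.add_mul_div_right _ _ hM, Nat.div_eq_of_lt hx, Nat.zero_add]
  have hq : (y + q * M) / M = q := by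
    rw [Nat.add_mul_div_right _ _ hM, Nat.div_eq_of_lt hy, Nat.zero_add]
  have hpq : p = q := by rw [← hp, ← hq, h]
  subst hpq
  exact ⟨rfl, by omega⟩

lemma base_repr_inj {N : ℕ} : ∀ {mm : ℕ} (b c : Fin mm → ℕ), (∀ k, b k < N) → (∀ k, c k < N) →
    (∑ k : Fin mm, b k * N ^ (k : ℕ)) = (∑ k : Fin mm, c k * N ^ (k : ℕ)) → b = c := by
  intro mm
  induction mm with
  | zero => intro b c _ _ _; funext k; exact k.elim0
  | succ mm ih =>
    intro b c hb hc h
    rw [Fin.sum_univ_castSucc, Fin.sum_univ_castSucc] at h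
    simp only [Fin.coe_castSucc, Fin.val_last] at h
    obtain ⟨h1, h2⟩ := digit_unique (sum_base_lt (fun k => b k.castSucc) (fun k => hb _))
      (sum_base_lt (fun k => c k.castSucc) (fun k => hc _)) h
    have h3 := ih (fun k => b k.castSucc) (fun k => c k.castSucc) (fun k => hb _) (fun k => hc _) h2
    funext k
    cases k using Fin.lastCases with
    | last => exact h1
    | cast i => exact congrFun h3 i

section Greedy
variable {K : Type*} [Field K] [CharZero K] {m n : ℕ}

lemma span_rank (α : Fin n → (Fin m →₀ ℕ)) (hα : Function.Injective α) (s : ℕ) (hs : s < n)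
    (P : Submodule K (Fin n → K)) (hP : Sset (K := K) α s ⊆ P) :
    s + 1 ≤ Module.finrank K P := by
  set N : ℕ := 1 + ∑ j : Fin n, ∑ k : Fin m, α j k with hN
  have hbound : ∀ j k, α j k < N := by
    intro j k
    have h1 : α j k ≤ ∑ k : Fin m, α j k :=
      Finset.single_le_sum (f := fun k => α j k) (fun _ _ => Nat.zero_le _) (mem_univ k)
    have h2 : (∑ k : Fin m, α j k) ≤ ∑ j : Fin n, ∑ k : Fin m, α j k :=
      Finset.single_le_sum (f := fun j => ∑ k : Fin m, α j k) (fun _ _ => Nat.zero_le _)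
        (mem_univ j)
    omega
  set x : Fin n → ℕ := fun j => ∑ k : Fin m, α j k * N ^ (k : ℕ) with hx
  have hxinj : Function.Injective x := by
    intro j j' h
    apply hα
    have h3 := base_repr_inj (fun k => α j k) (fun k => α j' k)
      (fun k => hbound j k) (fun k => hbound j' k) h
    exact Finsupp.ext (congrFun h3)
  set W : Fin (s + 1) → (Fin n → K) := fun t j => (x j : K) ^ (t : ℕ) with hW
  have hWspan : ∀ t : Fin (s + 1), W t ∈ Submodule.span K (Sset (K := K) α s) := by
    intro t
    have h1 := pow_mem_span (K := K) α N (t : ℕ)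
    have hsub : Sset (K := K) α (t : ℕ) ⊆ Sset (K := K) α s := by
      rintro w ⟨δ, hδ, rfl⟩
      exact ⟨δ, le_trans hδ (by omega : (t : ℕ) ≤ s), rfl⟩
    exact Submodule.span_mono hsub h1
  have hWP : ∀ t, W t ∈ P := fun t => (Submodule.span_le.mpr hP) (hWspan t)
  have hcast : s + 1 ≤ n := hs
  set ι : Fin (s + 1) → Fin n := Fin.castLE hcast with hι
  set v : Fin (s + 1) → K := fun t' => (x (ι t') : K) with hv
  have hvinj : Function.Injective v := by
    intro a b h
    exact Fin.castLE_injective hcast (hxinj (Nat.cast_injective h))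
  have hdet : (Matrix.vandermonde v).det ≠ 0 := by
    rw [Matrix.det_vandermonde]
    refine Finset.prod_ne_zero_iff.mpr fun i _ => Finset.prod_ne_zero_iff.mpr
      fun j hj => sub_ne_zero_of_ne fun hvv => ?_
    exact absurd (hvinj hvv) (Finset.mem_Ioi.mp hj).ne'
  have hcols : LinearIndependent K fun t => (Matrix.vandermonde v).transpose t :=
    Matrix.linearIndependent_cols_iff_isUnit.mpr
      ((Matrix.isUnit_iff_isUnit_det _).mpr (isUnit_iff_ne_zero.mpr hdet))
  have hWli : LinearIndependent K W := by
    refine LinearIndependent.of_comp (LinearMap.funLeft K K ι) ?_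
    have hcomp : (⇑(LinearMap.funLeft K K ι)) ∘ W = fun t => (Matrix.vandermonde v).transpose t := by
      funext t t'
      rfl
    rw [hcomp]
    exact hcols
  have h1 : Submodule.span K (Set.range W) ≤ P :=
    Submodule.span_le.mpr (Set.range_subset_iff.mpr hWP)
  have h2 : Module.finrank K (Submodule.span K (Set.range W)) = s + 1 := by
    rw [finrank_span_eq_card hWli, Fintype.card_fin]
  calc s + 1 = Module.finrank K (Submodule.span K (Set.range W)) := h2.symm
    _ ≤ Module.finrank K P := Submodule.finrank_mono h1

lemma exists_indep (α : Fin n → (Fin m →₀ ℕ)) (hα : Function.Injective α) :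
    ∀ s : ℕ, s ≤ n →
    ∃ Δ : Fin s → (Fin m →₀ ℕ), (∀ i : Fin s, ((Δ i).sum fun _ e => e) ≤ (i : ℕ)) ∧
      LinearIndependent K (fun i => vrow (K := K) α (Δ i)) := by
  intro s
  induction s with
  | zero => exact fun _ => ⟨Fin.elim0, fun i => i.elim0, linearIndependent_empty_type⟩
  | succ s ih =>
    intro hs
    obtain ⟨Δ, hΔ, hind⟩ := ih (le_trans (Nat.le_succ s) hs)
    set P := Submodule.span K (Set.range fun i => vrow (K := K) α (Δ i)) with hP
    have hex : ∃ δ : Fin m →₀ ℕ, (δ.sum fun _ e => e) ≤ s ∧ vrow (K := K) α δ ∉ P := by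
      by_contra hcon
      push_neg at hcon
      have hsub : Sset (K := K) α s ⊆ P := by
        rintro w ⟨δ, hδ, rfl⟩
        exact hcon δ hδ
      have h1 := span_rank α hα s (Nat.lt_of_succ_le hs) P hsub
      have h2 : Module.finrank K P ≤ s := by
        have h3 := finrank_range_le_card (R := K) (fun i => vrow (K := K) α (Δ i))
        rw [Set.finrank] at h3
        simpa using h3
      omega
    obtain ⟨δ, hδs, hδP⟩ := hex
    refine ⟨Fin.snoc Δ δ, ?_, ?_⟩
    · intro i
      cases i using Fin.lastCases with
      | last => rw [Fin.snoc_last]; simpa using hδs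
      | cast i => rw [Fin.snoc_castSucc]; simpa using hΔ i
    · have heq : (fun i => vrow (K := K) α ((Fin.snoc Δ δ : Fin (s+1) → (Fin m →₀ ℕ)) i)) =
          Fin.snoc (fun i => vrow (K := K) α (Δ i)) (vrow (K := K) α δ) := by
        funext i
        cases i using Fin.lastCases with
        | last => rw [Fin.snoc_last, Fin.snoc_last]
        | cast i => rw [Fin.snoc_castSucc, Fin.snoc_castSucc]
      rw [heq]
      exact linearIndependent_fin_snoc.mpr ⟨hind, hδP⟩
end Greedy

section MainPart

open Finset MvPowerSeries

variable {K : Type*} [Field K] [CharZero K] {m n : ℕ}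

lemma toLex_add' {m : ℕ} (a b : Fin m →₀ ℕ) : toLex (a + b) = toLex a + toLex b := rfl

lemma coeff_det_expand (Δ : Fin n → (Fin m →₀ ℕ)) (h : Fin n → MvPowerSeries (Fin m) K)
    (β : Fin m →₀ ℕ) :
    MvPowerSeries.coeff β
        (Matrix.det (Matrix.of fun i j : Fin n => mvpsDiffOp (Δ i) (h j))) =
      ∑ σ : Equiv.Perm (Fin n), ((Equiv.Perm.sign σ : ℤ) •
        ∑ l ∈ finsuppAntidiag (univ : Finset (Fin n)) β,
          ∏ j : Fin n, MvPowerSeries.coeff (l j) (mvpsDiffOp (Δ (σ j)) (h j))) := by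
  rw [Matrix.det_apply, map_sum]
  refine Finset.sum_congr rfl fun σ _ => ?_
  rw [Units.smul_def, map_zsmul]
  congr 1
  rw [MvPowerSeries.coeff_prod]
  rfl

lemma coeff_det_monomial (Δ : Fin n → (Fin m →₀ ℕ)) (a : Fin n → (Fin m →₀ ℕ)) (c : Fin n → K)
    (β : Fin m →₀ ℕ) :
    MvPowerSeries.coeff β
        (Matrix.det (Matrix.of fun i j : Fin n =>
          mvpsDiffOp (Δ i) (MvPowerSeries.monomial (a j) (c j)))) =
      ∑ σ : Equiv.Perm (Fin n), ((Equiv.Perm.sign σ : ℤ) •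
        (if β = ∑ j : Fin n, (a j - Δ (σ j)) then
          ∏ j : Fin n, ((∏ k : Fin m, ((a j k).descFactorial (Δ (σ j) k) : K)) * c j)
        else 0)) := by
  rw [Matrix.det_apply, map_sum]
  refine Finset.sum_congr rfl fun σ _ => ?_
  rw [Units.smul_def, map_zsmul]
  congr 1
  have hent : ∀ j : Fin n,
      (Matrix.of fun i j : Fin n => mvpsDiffOp (Δ i) (MvPowerSeries.monomial (a j) (c j)))
          (σ j) j =
        MvPowerSeries.monomial (a j - Δ (σ j))
          ((∏ k : Fin m, ((a j k).descFactorial (Δ (σ j) k) : K)) * c j) :=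
    fun j => mvpsDiffOp_monomial _ _ _
  rw [Finset.prod_congr rfl fun j _ => hent j, prod_monomial, MvPowerSeries.coeff_monomial]

theorem main_key (f : Fin n → MvPowerSeries (Fin m) K) (α : Fin n → (Fin m →₀ ℕ))
    (hLM : ∀ i, IsLexLeadingExp (f i) (α i)) (Δ : Fin n → (Fin m →₀ ℕ)) (γ : Fin m →₀ ℕ)
    (hγ : IsLexLeadingExp (Matrix.det (Matrix.of fun i j : Fin n => mvpsDiffOp (Δ i)
        (MvPowerSeries.monomial (α j) (MvPowerSeries.coeff (α j) (f j))))) γ) :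
    IsLexLeadingExp (Matrix.det (Matrix.of fun i j : Fin n => mvpsDiffOp (Δ i) (f j))) γ ∧
      MvPowerSeries.coeff γ
          (Matrix.det (Matrix.of fun i j : Fin n => mvpsDiffOp (Δ i) (f j))) =
        MvPowerSeries.coeff γ
          (Matrix.det (Matrix.of fun i j : Fin n => mvpsDiffOp (Δ i)
            (MvPowerSeries.monomial (α j) (MvPowerSeries.coeff (α j) (f j))))) := by
  set c : Fin n → K := fun j => MvPowerSeries.coeff (α j) (f j) with hc
  -- Step 1 : γ + ∑ Δ = ∑ α
  have hγsum : γ + ∑ i : Fin n, Δ i = ∑ j : Fin n, α j := by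
    have h0 := hγ.1
    rw [coeff_det_monomial] at h0
    obtain ⟨σ, _, hσ⟩ := Finset.exists_ne_zero_of_sum_ne_zero h0
    have hite : (if γ = ∑ j : Fin n, (α j - Δ (σ j)) then
        ∏ j : Fin n, ((∏ k : Fin m, ((α j k).descFactorial (Δ (σ j) k) : K)) * c j)
      else 0) ≠ 0 := by
      intro h1
      rw [h1, smul_zero] at hσ
      exact hσ rfl
    by_cases hcond : γ = ∑ j : Fin n, (α j - Δ (σ j))
    · rw [if_pos hcond] at hite
      have hle : ∀ j, Δ (σ j) ≤ α j := fun j =>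
        le_of_descprod_ne_zero _ _
          (left_ne_zero_of_mul (Finset.prod_ne_zero_iff.mp hite j (mem_univ j)))
      have hsum : (∑ j : Fin n, (α j - Δ (σ j))) + ∑ j : Fin n, Δ (σ j) = ∑ j : Fin n, α j := by
        rw [← Finset.sum_add_distrib]
        exact Finset.sum_congr rfl fun j _ => tsub_add_cancel_of_le (hle j)
      rw [hcond, ← Equiv.sum_comp σ Δ]
      exact hsum
    · exact absurd (if_neg hcond) hite
  -- Step 2 : key pointwise bound
  have key_l : ∀ (β : Fin m →₀ ℕ) (σ : Equiv.Perm (Fin n)) (l : Fin n →₀ (Fin m →₀ ℕ)),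
      l ∈ finsuppAntidiag (univ : Finset (Fin n)) β →
      (∏ j : Fin n, MvPowerSeries.coeff (l j) (mvpsDiffOp (Δ (σ j)) (f j))) ≠ 0 →
      toLex (∑ j : Fin n, α j) ≤ toLex (β + ∑ i : Fin n, Δ i) ∧
        ((∀ j, l j + Δ (σ j) = α j) ∨
          toLex (∑ j : Fin n, α j) < toLex (β + ∑ i : Fin n, Δ i)) := by
    intro β σ l hl hne
    have hptwise : ∀ j, toLex (α j) ≤ toLex (l j + Δ (σ j)) := by
      intro j
      have hj := Finset.prod_ne_zero_iff.mp hne j (mem_univ j)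
      rw [coeff_mvpsDiffOp] at hj
      exact (hLM j).2 _ (right_ne_zero_of_mul hj)
    have hsum2 : (∑ j : Fin n, toLex (l j + Δ (σ j))) = toLex (β + ∑ i : Fin n, Δ i) := by
      rw [← toLex_sum]
      congr 1
      rw [Finset.sum_add_distrib, (Finset.mem_finsuppAntidiag.mp hl).1, Equiv.sum_comp σ Δ]
    constructor
    · rw [toLex_sum, ← hsum2]
      exact Finset.sum_le_sum fun j _ => hptwise j
    · by_cases hall : ∀ j, l j + Δ (σ j) = α j
      · exact Or.inl hall
      · push_neg at hall
        obtain ⟨j0, hj0⟩ := hall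
        refine Or.inr ?_
        rw [toLex_sum, ← hsum2]
        exact Finset.sum_lt_sum (fun j _ => hptwise j)
          ⟨j0, mem_univ j0, lt_of_le_of_ne (hptwise j0)
            (fun he => hj0 (toLex.injective he).symm)⟩
  -- Step 3 : coefficient at γ agrees
  have hcoeff_eq : MvPowerSeries.coeff γ
        (Matrix.det (Matrix.of fun i j : Fin n => mvpsDiffOp (Δ i) (f j))) =
      MvPowerSeries.coeff γ
        (Matrix.det (Matrix.of fun i j : Fin n => mvpsDiffOp (Δ i)
          (MvPowerSeries.monomial (α j) (c j)))) := by
    rw [coeff_det_expand, coeff_det_expand]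
    refine Finset.sum_congr rfl fun σ _ => ?_
    congr 1
    refine Finset.sum_congr rfl fun l hl => ?_
    by_cases hall : ∀ j, l j + Δ (σ j) = α j
    · refine Finset.prod_congr rfl fun j _ => ?_
      rw [coeff_mvpsDiffOp, coeff_mvpsDiffOp, hall j, MvPowerSeries.coeff_monomial_same]
    · push_neg at hall
      obtain ⟨j0, hj0⟩ := hall
      have hrhs : (∏ j : Fin n, MvPowerSeries.coeff (l j)
          (mvpsDiffOp (Δ (σ j)) (MvPowerSeries.monomial (α j) (c j)))) = 0 := by
        refine Finset.prod_eq_zero (mem_univ j0) ?_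
        rw [coeff_mvpsDiffOp, MvPowerSeries.coeff_monomial, if_neg hj0, mul_zero]
      rw [hrhs]
      by_contra hne
      obtain ⟨_, hor⟩ := key_l γ σ l hl hne
      rcases hor with hall2 | hlt
      · exact hj0 (hall2 j0)
      · rw [hγsum] at hlt
        exact lt_irrefl _ hlt
  refine ⟨⟨?_, ?_⟩, hcoeff_eq⟩
  · rw [hcoeff_eq]
    exact hγ.1
  · intro β hβ
    rw [coeff_det_expand] at hβ
    obtain ⟨σ, _, hσ⟩ := Finset.exists_ne_zero_of_sum_ne_zero hβ
    have hinner : (∑ l ∈ finsuppAntidiag (univ : Finset (Fin n)) β,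
        ∏ j : Fin n, MvPowerSeries.coeff (l j) (mvpsDiffOp (Δ (σ j)) (f j))) ≠ 0 := by
      intro h1
      rw [h1, smul_zero] at hσ
      exact hσ rfl
    obtain ⟨l, hl, hlne⟩ := Finset.exists_ne_zero_of_sum_ne_zero hinner
    have hle := (key_l β σ l hl hlne).1
    rw [← hγsum, toLex_add', toLex_add'] at hle
    exact le_of_add_le_add_right hle

end MainPart

end GLWAux

open Finset GLWAux
theorem generalized_wronskian_of_distinct_leading_exponents {K : Type*} [Field K]
    [CharZero K] (m n : ℕ) (f : Fin n → MvPowerSeries (Fin m) K)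
    (α : Fin n → (Fin m →₀ ℕ)) (hLM : ∀ i, IsLexLeadingExp (f i) (α i))
    (hα : Function.Injective α) :
    (∃ Δ : Fin n → (Fin m →₀ ℕ),
      (∀ s : Fin n, ((Δ s).sum fun _ e => e) ≤ (s : ℕ)) ∧
      Matrix.det (Matrix.of fun i j : Fin n => mvpsDiffOp (Δ i) (f j)) ≠ 0) ∧
    ∀ Δ : Fin n → (Fin m →₀ ℕ),
      (∀ s : Fin n, ((Δ s).sum fun _ e => e) ≤ (s : ℕ)) →
      ∀ γ : Fin m →₀ ℕ,
        IsLexLeadingExp (Matrix.det (Matrix.of fun i j : Fin n => mvpsDiffOp (Δ i)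
          (MvPowerSeries.monomial (α j) (MvPowerSeries.coeff (α j) (f j))))) γ →
        IsLexLeadingExp (Matrix.det (Matrix.of fun i j : Fin n =>
            mvpsDiffOp (Δ i) (f j))) γ ∧
          MvPowerSeries.coeff γ
              (Matrix.det (Matrix.of fun i j : Fin n => mvpsDiffOp (Δ i) (f j))) =
            MvPowerSeries.coeff γ
              (Matrix.det (Matrix.of fun i j : Fin n => mvpsDiffOp (Δ i)
                (MvPowerSeries.monomial (α j) (MvPowerSeries.coeff (α j) (f j))))) := by
  refine ⟨?_, fun Δ _ γ hγ => main_key f α hLM Δ γ hγ⟩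
  obtain ⟨Δ, hΔb, hΔind⟩ := exists_indep (K := K) α hα n le_rfl
  refine ⟨Δ, hΔb, ?_⟩
  set c : Fin n → K := fun j => MvPowerSeries.coeff (α j) (f j) with hc
  set γ0 : Fin m →₀ ℕ := (∑ j : Fin n, α j) - (∑ i : Fin n, Δ i) with hγ0
  have hAE : ∀ σ : Equiv.Perm (Fin n),
      (∏ j : Fin n, ((∏ k : Fin m, ((α j k).descFactorial (Δ (σ j) k) : K)) * c j)) ≠ 0 →
      (∑ j : Fin n, (α j - Δ (σ j))) = γ0 := by
    intro σ hAσ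
    have hle : ∀ j, Δ (σ j) ≤ α j := fun j =>
      le_of_descprod_ne_zero _ _
        (left_ne_zero_of_mul (Finset.prod_ne_zero_iff.mp hAσ j (mem_univ j)))
    have hsum : (∑ j : Fin n, (α j - Δ (σ j))) + ∑ j : Fin n, Δ (σ j) = ∑ j : Fin n, α j := by
      rw [← Finset.sum_add_distrib]
      exact Finset.sum_congr rfl fun j _ => tsub_add_cancel_of_le (hle j)
    rw [Equiv.sum_comp σ Δ] at hsum
    rw [hγ0]
    exact eq_tsub_of_add_eq hsum
  -- leading exponent of the monomial Wronskian is γ0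
  have hW0 : IsLexLeadingExp (Matrix.det (Matrix.of fun i j : Fin n => mvpsDiffOp (Δ i)
      (MvPowerSeries.monomial (α j) (MvPowerSeries.coeff (α j) (f j))))) γ0 := by
    constructor
    · rw [coeff_det_monomial]
      have hrw : (∑ σ : Equiv.Perm (Fin n), ((Equiv.Perm.sign σ : ℤ) •
          (if γ0 = ∑ j : Fin n, (α j - Δ (σ j)) then
            ∏ j : Fin n, ((∏ k : Fin m, ((α j k).descFactorial (Δ (σ j) k) : K)) * c j)
          else 0))) =
          (Matrix.det (Matrix.of fun i j : Fin n =>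
            ∏ k : Fin m, ((α j k).descFactorial (Δ i k) : K))) * ∏ j : Fin n, c j := by
        rw [Matrix.det_apply, Finset.sum_mul]
        refine Finset.sum_congr rfl fun σ _ => ?_
        have hterm : (if γ0 = ∑ j : Fin n, (α j - Δ (σ j)) then
            ∏ j : Fin n, ((∏ k : Fin m, ((α j k).descFactorial (Δ (σ j) k) : K)) * c j)
          else 0) =
            ∏ j : Fin n, ((∏ k : Fin m, ((α j k).descFactorial (Δ (σ j) k) : K)) * c j) := by
          by_cases hAσ : (∏ j : Fin n,
              ((∏ k : Fin m, ((α j k).descFactorial (Δ (σ j) k) : K)) * c j)) = 0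
          · split_ifs with hcnd
            · rfl
            · exact hAσ.symm
          · exact if_pos ((hAE σ hAσ).symm)
        rw [hterm, Units.smul_def, smul_mul_assoc]
        congr 1
        exact Finset.prod_mul_distrib
      rw [hrw]
      refine mul_ne_zero ?_ (Finset.prod_ne_zero_iff.mpr fun j _ => (hLM j).1)
      have hrows : LinearIndependent K (fun i =>
          (Matrix.of fun i j : Fin n =>
            ∏ k : Fin m, ((α j k).descFactorial (Δ i k) : K)) i) := hΔind
      have hunit := Matrix.linearIndependent_rows_iff_isUnit.mp hrows
      exact ((Matrix.isUnit_iff_isUnit_det _).mp hunit).ne_zero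
    · intro β hβ
      rw [coeff_det_monomial] at hβ
      obtain ⟨σ, _, hσ⟩ := Finset.exists_ne_zero_of_sum_ne_zero hβ
      have hite : (if β = ∑ j : Fin n, (α j - Δ (σ j)) then
          ∏ j : Fin n, ((∏ k : Fin m, ((α j k).descFactorial (Δ (σ j) k) : K)) * c j)
        else 0) ≠ 0 := by
        intro h1
        rw [h1, smul_zero] at hσ
        exact hσ rfl
      by_cases hcond : β = ∑ j : Fin n, (α j - Δ (σ j))
      · rw [if_pos hcond] at hite
        have hβγ : β = γ0 := by
          rw [hcond]
          exact hAE σ hite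
        rw [hβγ]
      · exact absurd (if_neg hcond) hite
  have hmk := main_key f α hLM Δ γ0 hW0
  intro h0
  have := hmk.1.1
  rw [h0, map_zero] at this
  exact this rfl
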